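/- Let k ≥ 1, g ≥ k, and let (H_n) be the PLRS generated by [1,...,1 (g ones), 0,...,0 (k zeros), 2^{k+1}]. Then (H_n) is incomplete; moreover, Brown's criterion fails at the term H_{2g+3}, i.e., H_{2g+3} > 1 + Σ_{i=1}^{2g+2} H_i. -/

import Mathlib

/-- A sequence of positive integers (indexed from 1) is complete if every positive
integer is a sum of distinct terms (each index used at most once). -/
def SeqComplete (a : ℕ → ℕ) : Prop :=
  ∀ N : ℕ, 0 < N → ∃ s : Finset ℕ, (∀ i ∈ s, 1 ≤ i) ∧ ∑ i ∈ s, a i = N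

/-- `H` is the positive linear recurrence sequence (PLRS) with coefficients
`c 1, …, c L` (indexed from 1). -/
def IsPLRS (L : ℕ) (c : ℕ → ℕ) (H : ℕ → ℕ) : Prop :=
  H 1 = 1 ∧
  (∀ n, 1 ≤ n → n < L → H (n + 1) = (∑ i ∈ Finset.Icc 1 n, c i * H (n + 1 - i)) + 1) ∧
  (∀ n, L ≤ n → H (n + 1) = ∑ i ∈ Finset.Icc 1 L, c i * H (n + 1 - i))

lemma geom1 (n : ℕ) : ∑ i ∈ Finset.Icc 1 n, 2 ^ (n - i) = 2 ^ n - 1 := by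
  induction n with
  | zero => simp
  | succ n ih =>
    rw [Finset.sum_Icc_succ_top (by omega : 1 ≤ n + 1)]
    have hdbl : ∑ i ∈ Finset.Icc 1 n, 2 ^ (n + 1 - i) =
        2 * ∑ i ∈ Finset.Icc 1 n, 2 ^ (n - i) := by
      rw [Finset.mul_sum]
      refine Finset.sum_congr rfl fun i hi => ?_
      simp only [Finset.mem_Icc] at hi
      rw [show n + 1 - i = (n - i) + 1 by omega, pow_succ]
      ring
    rw [hdbl, ih]
    have h2 : 1 ≤ 2 ^ n := Nat.one_le_pow _ _ (by norm_num)
    simp only [Nat.sub_self, pow_zero, pow_succ]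
    omega

lemma geom2 (n : ℕ) : ∑ i ∈ Finset.Icc 1 n, 2 ^ (i - 1) = 2 ^ n - 1 := by
  induction n with
  | zero => simp
  | succ n ih =>
    rw [Finset.sum_Icc_succ_top (by omega : 1 ≤ n + 1), ih]
    have h2 : 1 ≤ 2 ^ n := Nat.one_le_pow _ _ (by norm_num)
    simp only [Nat.add_sub_cancel, pow_succ]
    omega

lemma geom3 (n : ℕ) : ∑ i ∈ Finset.Icc 1 n, 2 ^ (n + 1 - i) = 2 ^ (n + 1) - 2 := by
  have hdbl : ∑ i ∈ Finset.Icc 1 n, 2 ^ (n + 1 - i) =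
      2 * ∑ i ∈ Finset.Icc 1 n, 2 ^ (n - i) := by
    rw [Finset.mul_sum]
    refine Finset.sum_congr rfl fun i hi => ?_
    simp only [Finset.mem_Icc] at hi
    rw [show n + 1 - i = (n - i) + 1 by omega, pow_succ]
    ring
  have h2 : 1 ≤ 2 ^ n := Nat.one_le_pow _ _ (by norm_num)
  rw [hdbl, geom1, pow_succ]
  omega

lemma Icc_split (a b c : ℕ) (h1 : a ≤ b) (h2 : b ≤ c) (f : ℕ → ℕ) :
    ∑ i ∈ Finset.Icc (a + 1) c, f i
      = ∑ i ∈ Finset.Icc (a + 1) b, f i + ∑ i ∈ Finset.Icc (b + 1) c, f i := by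
  rw [Finset.Icc_add_one_left_eq_Ioc, Finset.Icc_add_one_left_eq_Ioc, Finset.Icc_add_one_left_eq_Ioc]
  exact (Finset.sum_Ioc_consecutive _ (by omega) h2).symm

lemma Icc_split1 (b c : ℕ) (h2 : b ≤ c) (f : ℕ → ℕ) :
    ∑ i ∈ Finset.Icc 1 c, f i = ∑ i ∈ Finset.Icc 1 b, f i + ∑ i ∈ Finset.Icc (b + 1) c, f i := by
  simpa using Icc_split 0 b c (by omega) h2 f

theorem g_ones_k_zeros_two_pow_incomplete (g k : ℕ) (hk : 1 ≤ k) (hg : k ≤ g) (H : ℕ → ℕ)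
    (h : IsPLRS (g + k + 1)
      (fun i => if i ≤ g then 1 else if i = g + k + 1 then 2 ^ (k + 1) else 0) H) :
    ¬ SeqComplete H ∧ H (2 * g + 3) > 1 + ∑ i ∈ Finset.Icc 1 (2 * g + 2), H i := by
  obtain ⟨h1, h2, h3⟩ := h
  -- H (n+1) = 2^n for n ≤ g
  have hA : ∀ n, n ≤ g → H (n + 1) = 2 ^ n := by
    intro n
    induction n using Nat.strong_induction_on with
    | _ n ih =>
      intro hn
      match n, ih, hn with
      | 0, _, _ => simpa using h1
      | (m + 1), ih, hn =>
        rw [h2 (m + 1) (by omega) (by omega)]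
        have hsum : ∑ i ∈ Finset.Icc 1 (m + 1),
            (if i ≤ g then 1 else if i = g + k + 1 then 2 ^ (k + 1) else 0) * H (m + 1 + 1 - i)
            = ∑ i ∈ Finset.Icc 1 (m + 1), 2 ^ (m + 1 - i) := by
          refine Finset.sum_congr rfl fun i hi => ?_
          simp only [Finset.mem_Icc] at hi
          rw [if_pos (by omega : i ≤ g), one_mul,
            show m + 1 + 1 - i = (m + 1 - i) + 1 by omega,
            ih (m + 1 - i) (by omega) (by omega)]
        simp only [hsum, geom1]
        have h2p : 1 ≤ 2 ^ (m + 1) := Nat.one_le_pow _ _ (by norm_num)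
        omega
  have hA' : ∀ n, 1 ≤ n → n ≤ g + 1 → H n = 2 ^ (n - 1) := by
    intro n h1n h2n
    obtain ⟨m, rfl⟩ := Nat.exists_eq_add_of_le h1n
    rw [Nat.add_comm 1 m, Nat.add_sub_cancel]
    exact hA m (by omega)
  -- H (g+2)
  have hB : H (g + 2) = 2 ^ (g + 1) - 1 := by
    rw [show g + 2 = (g + 1) + 1 by ring, h2 (g + 1) (by omega) (by omega),
      Finset.sum_Icc_succ_top (by omega : 1 ≤ g + 1)]
    have hlast : (if g + 1 ≤ g then 1 else if g + 1 = g + k + 1 then 2 ^ (k + 1) else 0)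
        * H (g + 1 + 1 - (g + 1)) = 0 := by
      rw [if_neg (by omega), if_neg (by omega), zero_mul]
    have hsum : ∑ i ∈ Finset.Icc 1 g,
        (if i ≤ g then 1 else if i = g + k + 1 then 2 ^ (k + 1) else 0) * H (g + 1 + 1 - i)
        = ∑ i ∈ Finset.Icc 1 g, 2 ^ (g + 1 - i) := by
      refine Finset.sum_congr rfl fun i hi => ?_
      simp only [Finset.mem_Icc] at hi
      rw [if_pos (by omega : i ≤ g), one_mul,
        show g + 1 + 1 - i = (g + 1 - i) + 1 by omega, hA (g + 1 - i) (by omega)]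
    simp only [hsum, hlast, geom3]
    have h2p : 2 ≤ 2 ^ (g + 1) := by
      calc 2 = 2 ^ 1 := (pow_one 2).symm
      _ ≤ 2 ^ (g + 1) := Nat.pow_le_pow_right (by norm_num) (by omega)
    omega
  -- sum of first g+2 terms
  have hS1 : ∑ i ∈ Finset.Icc 1 (g + 1), H i = 2 ^ (g + 1) - 1 := by
    rw [show ∑ i ∈ Finset.Icc 1 (g + 1), H i = ∑ i ∈ Finset.Icc 1 (g + 1), 2 ^ (i - 1) from
      Finset.sum_congr rfl fun i hi => by
        simp only [Finset.mem_Icc] at hi; exact hA' i hi.1 hi.2, geom2]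
  have hS2 : ∑ i ∈ Finset.Icc 1 (g + 2), H i = 2 ^ (g + 2) - 2 := by
    rw [show g + 2 = (g + 1) + 1 by ring, Finset.sum_Icc_succ_top (by omega : 1 ≤ g + 1 + 1),
      hS1, show (g + 1) + 1 = g + 2 by ring, hB]
    have h2p : 1 ≤ 2 ^ (g + 1) := Nat.one_le_pow _ _ (by norm_num)
    rw [show g + 2 = (g + 1) + 1 by ring, pow_succ 2 (g + 1)]
    omega
  -- the key value of H (2g+3)
  have hKey : H (2 * g + 3) = (∑ j ∈ Finset.Icc (g + 3) (2 * g + 2), H j) + 2 ^ (g + 2) := by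
    rw [show 2 * g + 3 = (2 * g + 2) + 1 by ring, h3 (2 * g + 2) (by omega)]
    have hsplit : ∑ i ∈ Finset.Icc 1 (g + k + 1),
        (if i ≤ g then 1 else if i = g + k + 1 then 2 ^ (k + 1) else 0) * H (2 * g + 2 + 1 - i)
        = (∑ i ∈ Finset.Icc 1 g,
            (if i ≤ g then 1 else if i = g + k + 1 then 2 ^ (k + 1) else 0) * H (2 * g + 2 + 1 - i))
          + ∑ i ∈ Finset.Icc (g + 1) (g + k + 1),
            (if i ≤ g then 1 else if i = g + k + 1 then 2 ^ (k + 1) else 0)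
              * H (2 * g + 2 + 1 - i) :=
      Icc_split1 g (g + k + 1) (by omega) _
    rw [hsplit]
    have hpart1 : ∑ i ∈ Finset.Icc 1 g,
        (if i ≤ g then 1 else if i = g + k + 1 then 2 ^ (k + 1) else 0) * H (2 * g + 2 + 1 - i)
        = ∑ j ∈ Finset.Icc (g + 3) (2 * g + 2), H j := by
      refine Finset.sum_nbij' (fun i => 2 * g + 3 - i) (fun j => 2 * g + 3 - j)
        ?_ ?_ ?_ ?_ ?_
      · intro a ha; simp only [Finset.mem_Icc] at *; omega
      · intro a ha; simp only [Finset.mem_Icc] at *; omega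
      · intro a ha; simp only [Finset.mem_Icc] at ha
        show 2 * g + 3 - (2 * g + 3 - a) = a; omega
      · intro a ha; simp only [Finset.mem_Icc] at ha
        show 2 * g + 3 - (2 * g + 3 - a) = a; omega
      · intro a ha
        simp only [Finset.mem_Icc] at ha
        rw [if_pos (by omega : a ≤ g), one_mul]
    have hpart2 : ∑ i ∈ Finset.Icc (g + 1) (g + k + 1),
        (if i ≤ g then 1 else if i = g + k + 1 then 2 ^ (k + 1) else 0) * H (2 * g + 2 + 1 - i)
        = 2 ^ (g + 2) := by
      have hcongr : ∑ i ∈ Finset.Icc (g + 1) (g + k + 1),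
          (if i ≤ g then 1 else if i = g + k + 1 then 2 ^ (k + 1) else 0) * H (2 * g + 2 + 1 - i)
          = ∑ i ∈ Finset.Icc (g + 1) (g + k + 1),
            (if i = g + k + 1 then 2 ^ (k + 1) * H (2 * g + 2 + 1 - i) else 0) := by
        refine Finset.sum_congr rfl fun i hi => ?_
        simp only [Finset.mem_Icc] at hi
        rw [if_neg (by omega : ¬ i ≤ g)]
        by_cases hcase : i = g + k + 1
        · rw [if_pos hcase, if_pos hcase]
        · rw [if_neg hcase, if_neg hcase, zero_mul]
      rw [hcongr, Finset.sum_ite_eq', if_pos (by simp only [Finset.mem_Icc]; omega),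
        show 2 * g + 2 + 1 - (g + k + 1) = g + 2 - k by omega,
        hA' (g + 2 - k) (by omega) (by omega), ← pow_add]
      congr 1
      omega
    rw [hpart1, hpart2]
  -- Brown's criterion fails at 2g+3
  have hFail : H (2 * g + 3) > 1 + ∑ i ∈ Finset.Icc 1 (2 * g + 2), H i := by
    have hsplit : ∑ i ∈ Finset.Icc 1 (2 * g + 2), H i
        = (∑ i ∈ Finset.Icc 1 (g + 2), H i) + ∑ i ∈ Finset.Icc (g + 3) (2 * g + 2), H i :=
      Icc_split1 (g + 2) (2 * g + 2) (by omega) _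
    rw [hsplit, hKey, hS2]
    have h2p : 2 ≤ 2 ^ (g + 2) := by
      calc 2 = 2 ^ 1 := (pow_one 2).symm
      _ ≤ 2 ^ (g + 2) := Nat.pow_le_pow_right (by norm_num) (by omega)
    omega
  -- monotonicity beyond 2g+3
  have hMono : ∀ n, 2 * g + 3 ≤ n → H (2 * g + 3) ≤ H n := by
    intro n hn
    induction n, hn using Nat.le_induction with
    | base => exact le_refl _
    | succ n hn ih =>
      refine le_trans ih ?_
      rw [h3 n (by omega)]
      have hone : (1 : ℕ) ∈ Finset.Icc 1 (g + k + 1) := by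
        simp only [Finset.mem_Icc]; omega
      calc H n = (if (1 : ℕ) ≤ g then 1 else if (1 : ℕ) = g + k + 1 then 2 ^ (k + 1) else 0)
            * H (n + 1 - 1) := by
            rw [if_pos (by omega : (1 : ℕ) ≤ g), one_mul, Nat.add_sub_cancel]
      _ ≤ ∑ i ∈ Finset.Icc 1 (g + k + 1),
            (if i ≤ g then 1 else if i = g + k + 1 then 2 ^ (k + 1) else 0) * H (n + 1 - i) :=
          Finset.single_le_sum
            (f := fun i => (if i ≤ g then 1 else if i = g + k + 1 then 2 ^ (k + 1) else 0)
              * H (n + 1 - i)) (fun i _ => Nat.zero_le _) hone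
  refine ⟨?_, hFail⟩
  intro hc
  obtain ⟨s, hs1, hs2⟩ := hc (1 + ∑ i ∈ Finset.Icc 1 (2 * g + 2), H i) (by omega)
  by_cases hcase : ∃ j ∈ s, 2 * g + 3 ≤ j
  · obtain ⟨j, hjs, hj2⟩ := hcase
    have hle : H j ≤ ∑ i ∈ s, H i := Finset.single_le_sum (fun i _ => Nat.zero_le _) hjs
    have := hMono j hj2
    omega
  · push_neg at hcase
    have hsub : s ⊆ Finset.Icc 1 (2 * g + 2) := by
      intro i hi
      simp only [Finset.mem_Icc]
      exact ⟨hs1 i hi, by have := hcase i hi; omega⟩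
    have hle : ∑ i ∈ s, H i ≤ ∑ i ∈ Finset.Icc 1 (2 * g + 2), H i :=
      Finset.sum_le_sum_of_subset hsub
    omega
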